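/- arXiv:2506.00563 — 4 statements merged into one kernel-verified Lean document; each statement's English description precedes it below -/
import Mathlib

section
/- Let d⁽⁰⁾ ≡ 0 on X × X and d⁽ⁿ⁺¹⁾ = F(d⁽ⁿ⁾) where F is the bisimulation operator of an EX-BMDP. Then for every n ∈ ℕ and every pair x, x₊ with φ*(x) = φ*(x₊), one has d⁽ⁿ⁾(x, x₊) = 0. -/
/-- The 1-Wasserstein distance between two distributions on a finite type,
as an infimum over couplings. -/
noncomputable def W1 {X : Type*} [Fintype X] (d : X → X → ℝ) (P Q : X → ℝ) : ℝ :=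
  sInf {c : ℝ | ∃ μ : X → X → ℝ, (∀ x y, 0 ≤ μ x y) ∧
    (∀ x, ∑ y, μ x y = P x) ∧ (∀ y, ∑ x, μ x y = Q y) ∧
    c = ∑ x, ∑ y, d x y * μ x y}

lemma W1_nonneg {X : Type*} [Fintype X] (d : X → X → ℝ) (hd : ∀ x y, 0 ≤ d x y)
    (P Q : X → ℝ) : 0 ≤ W1 d P Q := by
  apply Real.sInf_nonneg
  rintro c ⟨μ, hμ0, -, -, rfl⟩
  exact Finset.sum_nonneg fun x _ => Finset.sum_nonneg fun y _ =>
    mul_nonneg (hd x y) (hμ0 x y)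

/-- every iterate of the bisimulation operator of an EX-BMDP,
starting from the zero function, vanishes on pairs of observations sharing the
same task-relevant state. -/
theorem bisimulation_iterates_denoising
    {S Ξ X A : Type*} [Fintype S] [Fintype Ξ] [Fintype X] [Fintype A] [Nonempty A]
    (ps : S → A → S → ℝ) (pξ : Ξ → Ξ → ℝ) (q : S → Ξ → X → ℝ) (R : S → A → ℝ)
    (enc : X → S × Ξ)
    (hps0 : ∀ s a s', 0 ≤ ps s a s') (hps1 : ∀ s a, ∑ s', ps s a s' = 1)
    (hpξ0 : ∀ ξ ξ', 0 ≤ pξ ξ ξ') (hpξ1 : ∀ ξ, ∑ ξ', pξ ξ ξ' = 1)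
    (hq0 : ∀ s ξ x, 0 ≤ q s ξ x) (hq1 : ∀ s ξ, ∑ x, q s ξ x = 1)
    (hblock : ∀ s ξ x, 0 < q s ξ x → enc x = (s, ξ))
    (cR cT : ℝ) (hcR : 0 ≤ cR) (hcT0 : 0 ≤ cT) (hcT1 : cT < 1)
    (Rg : X → A → ℝ) (hRg : ∀ x a, Rg x a = R (enc x).1 a)
    (Pg : X → A → X → ℝ)
    (hPg : ∀ x a x', Pg x a x' =
      ∑ s', ∑ ξ', ps (enc x).1 a s' * pξ (enc x).2 ξ' * q s' ξ' x')
    -- the sequence of iterates d⁽ⁿ⁾ of the bisimulation operator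
    (d : ℕ → X → X → ℝ)
    (h0 : ∀ x y, d 0 x y = 0)
    (hsucc : ∀ n x₁ x₂, d (n + 1) x₁ x₂ =
      ⨆ a : A, (cR * |Rg x₁ a - Rg x₂ a| + cT * W1 (d n) (Pg x₁ a) (Pg x₂ a))) :
    ∀ n : ℕ, ∀ x xp : X, (enc x).1 = (enc xp).1 → d n x xp = 0 := by
  suffices H : ∀ n : ℕ, (∀ x y, 0 ≤ d n x y) ∧
      (∀ x xp : X, (enc x).1 = (enc xp).1 → d n x xp = 0) by
    exact fun n => (H n).2
  intro n
  induction n with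
  | zero => exact ⟨fun x y => (h0 x y).ge, fun x xp _ => h0 x xp⟩
  | succ n ih =>
    obtain ⟨ihnn, ihz⟩ := ih
    -- key: for same-task-state pairs, W1 vanishes
    have hW1 : ∀ (x xp : X) (a : A), (enc x).1 = (enc xp).1 →
        W1 (d n) (Pg x a) (Pg xp a) = 0 := by
      intro x xp a hxx
      refine le_antisymm ?_ (W1_nonneg _ ihnn _ _)
      -- construct the coupling
      set μ : X → X → ℝ := fun y y' => ∑ s',
        ps (enc x).1 a s' * ((∑ ξ', pξ (enc x).2 ξ' * q s' ξ' y) *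
          (∑ ξ'', pξ (enc xp).2 ξ'' * q s' ξ'' y')) with hμdef
      have hμ0 : ∀ y y', 0 ≤ μ y y' := by
        intro y y'
        refine Finset.sum_nonneg fun s' _ => mul_nonneg (hps0 _ _ _) (mul_nonneg ?_ ?_) <;>
          exact Finset.sum_nonneg fun ξ' _ => mul_nonneg (by apply hpξ0) (by apply hq0)
      have hmarg1 : ∀ y, ∑ y', μ y y' = Pg x a y := by
        intro y
        rw [hPg, Finset.sum_comm]
        refine Finset.sum_congr rfl fun s' _ => ?_
        simp only [hμdef, ← Finset.mul_sum]
        have : ∑ y', ∑ ξ'', pξ (enc xp).2 ξ'' * q s' ξ'' y' = 1 := by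
          rw [Finset.sum_comm]
          simp only [← Finset.mul_sum, hq1, mul_one, hpξ1]
        rw [this, mul_one, Finset.mul_sum]
        exact Finset.sum_congr rfl fun ξ' _ => by ring
      have hmarg2 : ∀ y', ∑ y, μ y y' = Pg xp a y' := by
        intro y'
        rw [hPg, ← hxx, Finset.sum_comm]
        refine Finset.sum_congr rfl fun s' _ => ?_
        calc ∑ y, ps (enc x).1 a s' * ((∑ ξ', pξ (enc x).2 ξ' * q s' ξ' y) *
              (∑ ξ'', pξ (enc xp).2 ξ'' * q s' ξ'' y'))
            = (∑ y, ∑ ξ', pξ (enc x).2 ξ' * q s' ξ' y) *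
              (ps (enc x).1 a s' * (∑ ξ'', pξ (enc xp).2 ξ'' * q s' ξ'' y')) := by
              rw [Finset.sum_mul]; exact Finset.sum_congr rfl fun y _ => by ring
          _ = ps (enc x).1 a s' * (∑ ξ'', pξ (enc xp).2 ξ'' * q s' ξ'' y') := by
              rw [Finset.sum_comm]
              simp only [← Finset.mul_sum, hq1, mul_one, hpξ1, one_mul]
          _ = ∑ ξ', ps (enc x).1 a s' * pξ (enc xp).2 ξ' * q s' ξ' y' := by
              rw [Finset.mul_sum]; exact Finset.sum_congr rfl fun ξ'' _ => by ring
      have hcost : ∑ y, ∑ y', d n y y' * μ y y' = 0 := by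
        refine Finset.sum_eq_zero fun y _ => Finset.sum_eq_zero fun y' _ => ?_
        by_cases hμz : μ y y' = 0
        · rw [hμz, mul_zero]
        · -- μ y y' ≠ 0 forces same task-relevant next state
          obtain ⟨s', -, hs'⟩ := Finset.exists_ne_zero_of_sum_ne_zero hμz
          have hA : (∑ ξ', pξ (enc x).2 ξ' * q s' ξ' y) ≠ 0 := by
            intro h; apply hs'; rw [h]; ring
          have hB : (∑ ξ'', pξ (enc xp).2 ξ'' * q s' ξ'' y') ≠ 0 := by
            intro h; apply hs'; rw [h]; ring
          obtain ⟨ξ', -, hξ'⟩ := Finset.exists_ne_zero_of_sum_ne_zero hA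
          obtain ⟨ξ'', -, hξ''⟩ := Finset.exists_ne_zero_of_sum_ne_zero hB
          have hqy : 0 < q s' ξ' y :=
            lt_of_le_of_ne (hq0 _ _ _) (fun h => hξ' (by rw [← h, mul_zero]))
          have hqy' : 0 < q s' ξ'' y' :=
            lt_of_le_of_ne (hq0 _ _ _) (fun h => hξ'' (by rw [← h, mul_zero]))
          have hey : (enc y).1 = (enc y').1 := by
            rw [hblock _ _ _ hqy, hblock _ _ _ hqy']
          rw [ihz y y' hey, zero_mul]
      have hbdd : BddBelow {c : ℝ | ∃ ν : X → X → ℝ, (∀ u v, 0 ≤ ν u v) ∧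
          (∀ u, ∑ v, ν u v = Pg x a u) ∧ (∀ v, ∑ u, ν u v = Pg xp a v) ∧
          c = ∑ u, ∑ v, d n u v * ν u v} := by
        refine ⟨0, ?_⟩
        rintro c ⟨ν, hν0, -, -, rfl⟩
        exact Finset.sum_nonneg fun u _ => Finset.sum_nonneg fun v _ =>
          mul_nonneg (ihnn u v) (hν0 u v)
      exact csInf_le hbdd ⟨μ, hμ0, hmarg1, hmarg2, hcost.symm⟩
    constructor
    · intro x y
      rw [hsucc]
      have bdd : BddAbove (Set.range fun a : A =>
          cR * |Rg x a - Rg y a| + cT * W1 (d n) (Pg x a) (Pg y a)) :=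
        (Set.finite_range _).bddAbove
      refine le_trans ?_ (le_ciSup bdd (Classical.arbitrary A))
      exact add_nonneg (mul_nonneg hcR (abs_nonneg _))
        (mul_nonneg hcT0 (W1_nonneg _ ihnn _ _))
    · intro x xp hxx
      rw [hsucc]
      have : ∀ a : A, cR * |Rg x a - Rg xp a| + cT * W1 (d n) (Pg x a) (Pg xp a) = 0 := by
        intro a
        rw [hRg, hRg, hxx, sub_self, abs_zero, mul_zero, hW1 x xp a hxx, mul_zero, add_zero]
      simp only [this, ciSup_const]
end

section
/- In an EX-BMDP with a finite observation space, if π is an exo-free policy (π(a|x) = π(a|x₊) whenever φ*(x) = φ*(x₊)), then the policy-dependent bisimulation metric dᵖⁱ, defined as the unique fixed point of d ↦ c_R·|Rᵖⁱ(x₁) − Rᵖⁱ(x₂)| + c_T·W₁(d)(Pᵖⁱ(·|x₁), Pᵖⁱ(·|x₂)) with 0 ≤ c_T < 1, satisfies dᵖⁱ(x, x₊) = 0 for all x, x₊ with φ*(x) = φ*(x₊). -/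
/-- in an EX-BMDP, the policy-dependent bisimulation metric of an
exo-free policy vanishes on pairs of observations sharing the same
task-relevant state. -/
theorem pbsm_exo_free_denoising
    {S Ξ X A : Type*} [Fintype S] [Fintype Ξ] [Fintype X] [Fintype A] [Nonempty A]
    (ps : S → A → S → ℝ) (pξ : Ξ → Ξ → ℝ) (q : S → Ξ → X → ℝ) (R : S → A → ℝ)
    (enc : X → S × Ξ)
    (hps0 : ∀ s a s', 0 ≤ ps s a s') (hps1 : ∀ s a, ∑ s', ps s a s' = 1)
    (hpξ0 : ∀ ξ ξ', 0 ≤ pξ ξ ξ') (hpξ1 : ∀ ξ, ∑ ξ', pξ ξ ξ' = 1)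
    (hq0 : ∀ s ξ x, 0 ≤ q s ξ x) (hq1 : ∀ s ξ, ∑ x, q s ξ x = 1)
    (hblock : ∀ s ξ x, 0 < q s ξ x → enc x = (s, ξ))
    (cR cT : ℝ) (hcR : 0 ≤ cR) (hcT0 : 0 ≤ cT) (hcT1 : cT < 1)
    (Rg : X → A → ℝ) (hRg : ∀ x a, Rg x a = R (enc x).1 a)
    (Pg : X → A → X → ℝ)
    (hPg : ∀ x a x', Pg x a x' =
      ∑ s', ∑ ξ', ps (enc x).1 a s' * pξ (enc x).2 ξ' * q s' ξ' x')
    -- the policy, assumed to be a probability over actions and exo-free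
    (π : X → A → ℝ)
    (hπ0 : ∀ x a, 0 ≤ π x a) (hπ1 : ∀ x, ∑ a, π x a = 1)
    (hexofree : ∀ x xp : X, (enc x).1 = (enc xp).1 → ∀ a, π x a = π xp a)
    -- policy-averaged reward and transition
    (Rπ : X → ℝ) (hRπ : ∀ x, Rπ x = ∑ a, π x a * Rg x a)
    (Pπ : X → X → ℝ) (hPπ : ∀ x x', Pπ x x' = ∑ a, π x a * Pg x a x')
    -- the PBSM: nonnegative fixed point of the policy-dependent operator
    (dpi : X → X → ℝ)
    (hnonneg : ∀ x y, 0 ≤ dpi x y)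
    (hfix : ∀ x₁ x₂ : X, dpi x₁ x₂ =
      cR * |Rπ x₁ - Rπ x₂| + cT * W1 dpi (Pπ x₁) (Pπ x₂)) :
    ∀ x xp : X, (enc x).1 = (enc xp).1 → dpi x xp = 0 := by
  classical
  intro x xp hx
  obtain ⟨p, hpT, hpmax⟩ := Finset.exists_max_image
      (Finset.univ.filter (fun p : X × X => (enc p.1).1 = (enc p.2).1))
      (fun p => dpi p.1 p.2) ⟨(x, xp), by simp [hx]⟩
  rw [Finset.mem_filter] at hpT
  set M := dpi p.1 p.2 with hMdef
  have hmaxle : ∀ y yp : X, (enc y).1 = (enc yp).1 → dpi y yp ≤ M := by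
    intro y yp h
    exact hpmax (y, yp) (by simp [h])
  have key : ∀ y yp : X, (enc y).1 = (enc yp).1 → dpi y yp ≤ cT * M := by
    intro y yp h
    have hR : Rπ y = Rπ yp := by
      rw [hRπ, hRπ]
      refine Finset.sum_congr rfl fun a _ => ?_
      rw [hexofree y yp h a, hRg, hRg, h]
    -- the coupling
    set μ : X → X → ℝ := fun y' z' => ∑ a, π y a * ∑ s', ps (enc y).1 a s' *
      ((∑ ξ', pξ (enc y).2 ξ' * q s' ξ' y') *
       (∑ ξ'', pξ (enc yp).2 ξ'' * q s' ξ'' z')) with hμ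
    have hA0 : ∀ (ξ0 : Ξ) (s' : S) (y' : X), 0 ≤ ∑ ξ', pξ ξ0 ξ' * q s' ξ' y' :=
      fun ξ0 s' y' => Finset.sum_nonneg fun ξ' _ => mul_nonneg (hpξ0 _ _) (hq0 _ _ _)
    have hμ0 : ∀ y' z', 0 ≤ μ y' z' := by
      intro y' z'
      refine Finset.sum_nonneg fun a _ => mul_nonneg (hπ0 _ _) ?_
      exact Finset.sum_nonneg fun s' _ => mul_nonneg (hps0 _ _ _)
        (mul_nonneg (hA0 _ _ _) (hA0 _ _ _))
    have hAone : ∀ (ξ0 : Ξ) (s' : S), ∑ z', (∑ ξ'', pξ ξ0 ξ'' * q s' ξ'' z') = 1 := by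
      intro ξ0 s'
      rw [Finset.sum_comm]
      have : ∀ ξ'' : Ξ, ∑ z', pξ ξ0 ξ'' * q s' ξ'' z' = pξ ξ0 ξ'' := by
        intro ξ''
        rw [← Finset.mul_sum, hq1, mul_one]
      rw [Finset.sum_congr rfl fun ξ'' _ => this ξ'', hpξ1]
    have hμ1 : ∀ y', ∑ z', μ y' z' = Pπ y y' := by
      intro y'
      rw [hPπ, Finset.sum_comm]
      refine Finset.sum_congr rfl fun a _ => ?_
      rw [← Finset.mul_sum, hPg]
      congr 1
      rw [Finset.sum_comm]
      refine Finset.sum_congr rfl fun s' _ => ?_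
      have : ∑ z', ps (enc y).1 a s' *
          ((∑ ξ', pξ (enc y).2 ξ' * q s' ξ' y') *
           (∑ ξ'', pξ (enc yp).2 ξ'' * q s' ξ'' z'))
          = ps (enc y).1 a s' * (∑ ξ', pξ (enc y).2 ξ' * q s' ξ' y') := by
        rw [← Finset.mul_sum, ← Finset.mul_sum, hAone, mul_one]
      rw [this, Finset.mul_sum]
      refine Finset.sum_congr rfl fun ξ' _ => ?_
      ring
    have hμ2 : ∀ z', ∑ y', μ y' z' = Pπ yp z' := by
      intro z'
      rw [hPπ, Finset.sum_comm]
      refine Finset.sum_congr rfl fun a _ => ?_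
      rw [← Finset.mul_sum, hexofree y yp h a, hPg]
      congr 1
      rw [Finset.sum_comm]
      refine Finset.sum_congr rfl fun s' _ => ?_
      have : ∑ y', ps (enc y).1 a s' *
          ((∑ ξ', pξ (enc y).2 ξ' * q s' ξ' y') *
           (∑ ξ'', pξ (enc yp).2 ξ'' * q s' ξ'' z'))
          = ps (enc y).1 a s' * (∑ ξ'', pξ (enc yp).2 ξ'' * q s' ξ'' z') := by
        have : ∀ y', ps (enc y).1 a s' *
            ((∑ ξ', pξ (enc y).2 ξ' * q s' ξ' y') *
             (∑ ξ'', pξ (enc yp).2 ξ'' * q s' ξ'' z'))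
            = ps (enc y).1 a s' * (∑ ξ'', pξ (enc yp).2 ξ'' * q s' ξ'' z') *
              (∑ ξ', pξ (enc y).2 ξ' * q s' ξ' y') := by
          intro y'; ring
        rw [Finset.sum_congr rfl fun y' _ => this y', ← Finset.mul_sum, hAone, mul_one]
      rw [this, ← h, Finset.mul_sum]
      refine Finset.sum_congr rfl fun ξ'' _ => ?_
      ring
    have hsupp : ∀ y' z', 0 < μ y' z' → (enc y').1 = (enc z').1 := by
      intro y' z' hpos
      by_contra hne
      have : μ y' z' = 0 := by
        rw [hμ]
        refine Finset.sum_eq_zero fun a _ => ?_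
        refine mul_eq_zero_of_right _ (Finset.sum_eq_zero fun s' _ => ?_)
        refine mul_eq_zero_of_right _ ?_
        rcases eq_or_ne ((enc y').1) s' with hy' | hy'
        · -- then the z' factor must vanish
          refine mul_eq_zero_of_right _ (Finset.sum_eq_zero fun ξ'' _ => ?_)
          rcases eq_or_lt_of_le (hq0 s' ξ'' z') with hq | hq
          · rw [← hq, mul_zero]
          · exact absurd (by rw [hblock s' ξ'' z' hq, ← hy']) hne
        · refine mul_eq_zero_of_left (Finset.sum_eq_zero fun ξ' _ => ?_) _
          rcases eq_or_lt_of_le (hq0 s' ξ' y') with hq | hq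
          · rw [← hq, mul_zero]
          · exact absurd (congrArg Prod.fst (hblock s' ξ' y' hq)) hy'
      linarith
    have hmass : ∑ y', ∑ z', μ y' z' = 1 := by
      have : ∀ y', ∑ z', μ y' z' = Pπ y y' := hμ1
      rw [Finset.sum_congr rfl fun y' _ => this y']
      have : ∀ y', Pπ y y' = ∑ a, π y a * Pg y a y' := fun y' => hPπ y y'
      rw [Finset.sum_congr rfl fun y' _ => this y', Finset.sum_comm]
      have : ∀ a, ∑ y', π y a * Pg y a y' = π y a := by
        intro a
        rw [← Finset.mul_sum]
        have : ∑ y', Pg y a y' = 1 := by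
          have : ∀ y', Pg y a y' = ∑ s', ∑ ξ',
              ps (enc y).1 a s' * pξ (enc y).2 ξ' * q s' ξ' y' := fun y' => hPg y a y'
          rw [Finset.sum_congr rfl fun y' _ => this y', Finset.sum_comm]
          have h1 : ∀ s', ∑ y', ∑ ξ', ps (enc y).1 a s' * pξ (enc y).2 ξ' * q s' ξ' y'
              = ps (enc y).1 a s' := by
            intro s'
            rw [Finset.sum_comm]
            have : ∀ ξ', ∑ y', ps (enc y).1 a s' * pξ (enc y).2 ξ' * q s' ξ' y'
                = ps (enc y).1 a s' * pξ (enc y).2 ξ' := by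
              intro ξ'
              rw [← Finset.mul_sum, hq1, mul_one]
            rw [Finset.sum_congr rfl fun ξ' _ => this ξ', ← Finset.mul_sum, hpξ1, mul_one]
          rw [Finset.sum_congr rfl fun s' _ => h1 s', hps1]
        rw [this, mul_one]
      rw [Finset.sum_congr rfl fun a _ => this a, hπ1]
    have hcost : (∑ y', ∑ z', dpi y' z' * μ y' z') ≤ M := by
      calc (∑ y', ∑ z', dpi y' z' * μ y' z')
          ≤ ∑ y', ∑ z', M * μ y' z' := by
            refine Finset.sum_le_sum fun y' _ => Finset.sum_le_sum fun z' _ => ?_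
            rcases eq_or_lt_of_le (hμ0 y' z') with hz | hz
            · rw [← hz, mul_zero, mul_zero]
            · exact mul_le_mul_of_nonneg_right (hmaxle y' z' (hsupp y' z' hz)) (le_of_lt hz)
        _ = M := by
            rw [Finset.sum_congr rfl fun y' _ => (Finset.mul_sum _ _ _).symm,
              ← Finset.mul_sum, hmass, mul_one]
    have hW : W1 dpi (Pπ y) (Pπ yp) ≤ M := by
      refine le_trans (csInf_le ?_ ?_) hcost
      · refine ⟨0, fun c hc => ?_⟩
        obtain ⟨ν, hν0, _, _, hc⟩ := hc
        subst hc
        exact Finset.sum_nonneg fun a _ => Finset.sum_nonneg fun b _ =>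
          mul_nonneg (hnonneg _ _) (hν0 _ _)
      · exact ⟨μ, hμ0, hμ1, hμ2, rfl⟩
    calc dpi y yp = cR * |Rπ y - Rπ yp| + cT * W1 dpi (Pπ y) (Pπ yp) := hfix y yp
      _ = cT * W1 dpi (Pπ y) (Pπ yp) := by rw [hR]; simp
      _ ≤ cT * M := mul_le_mul_of_nonneg_left hW hcT0
  have hM0 : 0 ≤ M := hnonneg _ _
  have h1 : M ≤ cT * M := key p.1 p.2 hpT.2
  have hMz : M = 0 := by nlinarith
  have h2 := hmaxle x xp hx
  have h3 := hnonneg x xp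
  linarith
end

section
/- The operator F on pseudometrics over a finite set X, defined by F(d)(x₁,x₂) = c_R·|R(x₁) − R(x₂)| + c_T·E_{x₁'∼P(·|x₁), x₂'∼P(·|x₂)}[d(x₁',x₂')] (the MICo operator with independent coupling), is a contraction of modulus c_T with respect to the supremum norm on bounded symmetric nonnegative functions, provided 0 ≤ c_T < 1. Hence it has a unique fixed point uᵖⁱ. -/
/-- the MICo operator with independent coupling is a contraction of
modulus `cT` with respect to the supremum norm, and hence has a unique fixed
point among nonnegative symmetric functions. -/
theorem mico_operator_contraction
    {X : Type*} [Fintype X]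
    (R : X → ℝ) (P : X → X → ℝ)
    (hP0 : ∀ x x', 0 ≤ P x x') (hP1 : ∀ x, ∑ x', P x x' = 1)
    (cR cT : ℝ) (hcR : 0 ≤ cR) (hcT0 : 0 ≤ cT) (hcT1 : cT < 1)
    (F : (X → X → ℝ) → (X → X → ℝ))
    (hF : ∀ d x₁ x₂, F d x₁ x₂ =
      cR * |R x₁ - R x₂| + cT * ∑ x₁', ∑ x₂', P x₁ x₁' * P x₂ x₂' * d x₁' x₂') :
    -- contraction of modulus cT in the supremum norm on bounded symmetric
    -- nonnegative functions
    (∀ d₁ d₂ : X → X → ℝ,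
      (∀ x y, 0 ≤ d₁ x y) → (∀ x y, d₁ x y = d₁ y x) →
      (∀ x y, 0 ≤ d₂ x y) → (∀ x y, d₂ x y = d₂ y x) →
      ∀ M : ℝ, (∀ x y, |d₁ x y - d₂ x y| ≤ M) →
        ∀ x y, |F d₁ x y - F d₂ x y| ≤ cT * M) ∧
    -- hence there is a unique fixed point uᵖⁱ (nonnegative and symmetric)
    (∃! u : X → X → ℝ,
      (∀ x y, 0 ≤ u x y) ∧ (∀ x y, u x y = u y x) ∧ (∀ x y, u x y = F u x y)) := by
  classical
  -- total mass of the product coupling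
  have hPP : ∀ x y : X, ∑ x₁', ∑ x₂', P x x₁' * P y x₂' = 1 := by
    intro x y
    have : ∀ x₁', ∑ x₂', P x x₁' * P y x₂' = P x x₁' := by
      intro x₁'
      rw [← Finset.mul_sum, hP1, mul_one]
    simp_rw [this, hP1]
  -- key contraction estimate (for arbitrary functions)
  have key : ∀ d₁ d₂ : X → X → ℝ, ∀ M : ℝ, (∀ x y, |d₁ x y - d₂ x y| ≤ M) →
      ∀ x y, |F d₁ x y - F d₂ x y| ≤ cT * M := by
    intro d₁ d₂ M hM x y
    have hdiff : F d₁ x y - F d₂ x y =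
        cT * ∑ x₁', ∑ x₂', P x x₁' * P y x₂' * (d₁ x₁' x₂' - d₂ x₁' x₂') := by
      rw [hF, hF]
      simp only [mul_sub, Finset.sum_sub_distrib]
      ring
    rw [hdiff, abs_mul, abs_of_nonneg hcT0]
    apply mul_le_mul_of_nonneg_left _ hcT0
    calc |∑ x₁', ∑ x₂', P x x₁' * P y x₂' * (d₁ x₁' x₂' - d₂ x₁' x₂')|
        ≤ ∑ x₁', |∑ x₂', P x x₁' * P y x₂' * (d₁ x₁' x₂' - d₂ x₁' x₂')| :=
          Finset.abs_sum_le_sum_abs _ _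
      _ ≤ ∑ x₁', ∑ x₂', |P x x₁' * P y x₂' * (d₁ x₁' x₂' - d₂ x₁' x₂')| := by
          apply Finset.sum_le_sum
          intro i _
          exact Finset.abs_sum_le_sum_abs _ _
      _ ≤ ∑ x₁', ∑ x₂', P x x₁' * P y x₂' * M := by
          apply Finset.sum_le_sum
          intro i _
          apply Finset.sum_le_sum
          intro j _
          rw [abs_mul, abs_of_nonneg (mul_nonneg (hP0 x i) (hP0 y j))]
          exact mul_le_mul_of_nonneg_left (hM i j) (mul_nonneg (hP0 x i) (hP0 y j))
      _ = M := by
          simp_rw [← Finset.sum_mul]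
          rw [hPP, one_mul]
  -- F is Lipschitz with constant cT on the (sup-metric) Pi space
  set K : NNReal := ⟨cT, hcT0⟩ with hKdef
  have hK : (K : ℝ) = cT := rfl
  have hlip : LipschitzWith K F := by
    apply LipschitzWith.of_dist_le_mul
    intro d₁ d₂
    rw [hK]
    have hM : ∀ x y, |d₁ x y - d₂ x y| ≤ dist d₁ d₂ := by
      intro x y
      rw [← Real.dist_eq]
      exact (dist_le_pi_dist (d₁ x) (d₂ x) y).trans (dist_le_pi_dist d₁ d₂ x)
    have hb := key d₁ d₂ (dist d₁ d₂) hM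
    rw [dist_pi_le_iff (mul_nonneg hcT0 dist_nonneg)]
    intro x
    rw [dist_pi_le_iff (mul_nonneg hcT0 dist_nonneg)]
    intro y
    rw [Real.dist_eq]
    exact hb x y
  have hK1 : K < 1 := by
    rw [← NNReal.coe_lt_coe, hK, NNReal.coe_one]
    exact hcT1
  have hcw : ContractingWith K F := ⟨hK1, hlip⟩
  -- uniqueness of fixed points (among all functions)
  have huniq : ∀ u v : X → X → ℝ, (∀ x y, u x y = F u x y) →
      (∀ x y, v x y = F v x y) → u = v := by
    intro u v hu hv
    by_contra hne
    have hd : 0 < dist u v := dist_pos.2 hne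
    have hufix : F u = u := by funext x y; exact (hu x y).symm
    have hvfix : F v = v := by funext x y; exact (hv x y).symm
    have : dist u v ≤ cT * dist u v := by
      calc dist u v = dist (F u) (F v) := by rw [hufix, hvfix]
        _ ≤ (K : ℝ) * dist u v := hlip.dist_le_mul u v
        _ = cT * dist u v := by rw [hK]
    nlinarith
  -- any fixed point is nonnegative
  have hnonneg : ∀ u : X → X → ℝ, (∀ x y, u x y = F u x y) → ∀ x y, 0 ≤ u x y := by
    intro u hu x y
    obtain ⟨⟨a, b⟩, -, hmin⟩ := Finset.exists_min_image (Finset.univ : Finset (X × X))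
      (fun p => u p.1 p.2) ⟨(x, y), Finset.mem_univ _⟩
    have hm : ∀ p q : X, u a b ≤ u p q := fun p q => hmin (p, q) (Finset.mem_univ _)
    have hsum : u a b ≤ ∑ x₁', ∑ x₂', P a x₁' * P b x₂' * u x₁' x₂' := by
      calc u a b = ∑ x₁', ∑ x₂', P a x₁' * P b x₂' * u a b := by
            simp_rw [← Finset.sum_mul]
            rw [hPP, one_mul]
        _ ≤ ∑ x₁', ∑ x₂', P a x₁' * P b x₂' * u x₁' x₂' := by
            apply Finset.sum_le_sum; intro i _
            apply Finset.sum_le_sum; intro j _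
            exact mul_le_mul_of_nonneg_left (hm i j)
              (mul_nonneg (hP0 a i) (hP0 b j))
    have hab : cT * u a b ≤ u a b := by
      have h1 := hu a b
      rw [hF] at h1
      have h2 : 0 ≤ cR * |R a - R b| := mul_nonneg hcR (abs_nonneg _)
      nlinarith [mul_le_mul_of_nonneg_left hsum hcT0]
    have h0 : 0 ≤ u a b := by nlinarith
    exact h0.trans (hm x y)
  -- the fixed point from Banach's theorem
  refine ⟨fun d₁ d₂ _ _ _ _ M hM => key d₁ d₂ M hM, ?_⟩
  set u := hcw.fixedPoint F with hudef
  have hufp : F u = u := hcw.fixedPoint_isFixedPt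
  have hufix : ∀ x y, u x y = F u x y := by
    intro x y; rw [hufp]
  -- symmetry of the fixed point
  have husymm : ∀ x y, u x y = u y x := by
    have hvfix : ∀ x y, (fun x y => u y x) x y = F (fun x y => u y x) x y := by
      intro x y
      simp only
      rw [hufix y x, hF, hF]
      congr 1
      · rw [abs_sub_comm]
      · congr 1
        rw [Finset.sum_comm]
        apply Finset.sum_congr rfl
        intro i _
        apply Finset.sum_congr rfl
        intro j _
        ring
    have := huniq _ _ hvfix hufix
    intro x y
    exact (congrFun (congrFun this x) y).symm
  refine ⟨u, ⟨hnonneg u hufix, husymm, hufix⟩, ?_⟩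
  intro v ⟨_, _, hvfix⟩
  exact huniq v u hvfix hufix
end

section
/- The MICo fixed point uᵖⁱ (the unique fixed point of d ↦ c_R·|R(x₁) − R(x₂)| + c_T·E_{x₁'∼P(·|x₁), x₂'∼P(·|x₂)}[d(x₁',x₂')]) is a diffuse metric: it is nonnegative, symmetric, and satisfies the triangle inequality uᵖⁱ(x,z) ≤ uᵖⁱ(x,y) + uᵖⁱ(y,z) for all x,y,z, though uᵖⁱ(x,x) may be nonzero. -/
private lemma wavg {ι : Type*} [Fintype ι] (p f : ι → ℝ) (hp : ∀ i, 0 ≤ p i)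
    (h1 : ∑ i, p i = 1) {M : ℝ} (hf : ∀ i, f i ≤ M) :
    ∑ i, p i * f i ≤ M := by
  calc ∑ i, p i * f i ≤ ∑ i, p i * M :=
        Finset.sum_le_sum fun i _ => mul_le_mul_of_nonneg_left (hf i) (hp i)
    _ = M := by rw [← Finset.sum_mul, h1, one_mul]

private lemma wavg2 {ι : Type*} [Fintype ι] (p q : ι → ℝ) (f : ι → ι → ℝ)
    (hp : ∀ i, 0 ≤ p i) (hq : ∀ i, 0 ≤ q i)
    (h1p : ∑ i, p i = 1) (h1q : ∑ i, q i = 1) {M : ℝ}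
    (hf : ∀ a c, f a c ≤ M) :
    ∑ a, ∑ c, p a * q c * f a c ≤ M := by
  have h : ∀ a, ∑ c, q c * f a c ≤ M := fun a => wavg q _ hq h1q (hf a)
  calc ∑ a, ∑ c, p a * q c * f a c = ∑ a, p a * ∑ c, q c * f a c := by
        refine Finset.sum_congr rfl fun a _ => ?_
        rw [Finset.mul_sum]
        exact Finset.sum_congr rfl fun c _ => by ring
    _ ≤ M := wavg p _ hp h1p h

private lemma wavg2_ge {ι : Type*} [Fintype ι] (p q : ι → ℝ) (f : ι → ι → ℝ)
    (hp : ∀ i, 0 ≤ p i) (hq : ∀ i, 0 ≤ q i)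
    (h1p : ∑ i, p i = 1) (h1q : ∑ i, q i = 1) {m : ℝ}
    (hf : ∀ a c, m ≤ f a c) :
    m ≤ ∑ a, ∑ c, p a * q c * f a c := by
  have h := wavg2 p q (fun a c => -f a c) hp hq h1p h1q (M := -m)
    (fun a c => neg_le_neg (hf a c))
  have : ∑ a, ∑ c, p a * q c * -f a c = -(∑ a, ∑ c, p a * q c * f a c) := by
    rw [← Finset.sum_neg_distrib]
    refine Finset.sum_congr rfl fun a _ => ?_
    rw [← Finset.sum_neg_distrib]
    exact Finset.sum_congr rfl fun c _ => by ring
  linarith [this ▸ h]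

private lemma wavg3 {ι : Type*} [Fintype ι] (p q r : ι → ℝ) (f : ι → ι → ι → ℝ)
    (hp : ∀ i, 0 ≤ p i) (hq : ∀ i, 0 ≤ q i) (hr : ∀ i, 0 ≤ r i)
    (h1p : ∑ i, p i = 1) (h1q : ∑ i, q i = 1) (h1r : ∑ i, r i = 1) {M : ℝ}
    (hf : ∀ a b c, f a b c ≤ M) :
    ∑ a, ∑ b, ∑ c, p a * q b * r c * f a b c ≤ M := by
  have h : ∀ a, ∑ b, ∑ c, q b * r c * f a b c ≤ M :=
    fun a => wavg2 q r _ hq hr h1q h1r (hf a)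
  calc ∑ a, ∑ b, ∑ c, p a * q b * r c * f a b c
      = ∑ a, p a * ∑ b, ∑ c, q b * r c * f a b c := by
        refine Finset.sum_congr rfl fun a _ => ?_
        rw [Finset.mul_sum]
        refine Finset.sum_congr rfl fun b _ => ?_
        rw [Finset.mul_sum]
        exact Finset.sum_congr rfl fun c _ => by ring
    _ ≤ M := wavg p _ hp h1p h

/-- the MICo fixed point is a diffuse metric: nonnegative,
symmetric, and satisfying the triangle inequality (without requiring zero
self-distances). -/
theorem mico_fixed_point_is_diffuse_metric
    {X : Type*} [Fintype X]
    (R : X → ℝ) (P : X → X → ℝ)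
    (hP0 : ∀ x x', 0 ≤ P x x') (hP1 : ∀ x, ∑ x', P x x' = 1)
    (cR cT : ℝ) (hcR : 0 ≤ cR) (hcT0 : 0 ≤ cT) (hcT1 : cT < 1)
    (u : X → X → ℝ)
    (hfix : ∀ x₁ x₂ : X, u x₁ x₂ =
      cR * |R x₁ - R x₂| + cT * ∑ x₁', ∑ x₂', P x₁ x₁' * P x₂ x₂' * u x₁' x₂') :
    (∀ x y : X, 0 ≤ u x y) ∧
    (∀ x y : X, u x y = u y x) ∧
    (∀ x y z : X, u x z ≤ u x y + u y z) := by
  rcases isEmpty_or_nonempty X with hE | hNE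
  · exact ⟨fun x => isEmptyElim x, fun x => isEmptyElim x, fun x => isEmptyElim x⟩
  -- Nonnegativity
  have hnonneg : ∀ x y : X, 0 ≤ u x y := by
    obtain ⟨⟨x₀, y₀⟩, -, hmin⟩ := Finset.exists_min_image
      (Finset.univ : Finset (X × X)) (fun pr => u pr.1 pr.2) Finset.univ_nonempty
    have hmin' : ∀ a c : X, u x₀ y₀ ≤ u a c := fun a c => hmin (a, c) (Finset.mem_univ _)
    have hS : u x₀ y₀ ≤ ∑ a, ∑ c, P x₀ a * P y₀ c * u a c :=
      wavg2_ge _ _ _ (hP0 x₀) (hP0 y₀) (hP1 x₀) (hP1 y₀) hmin'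
    have h0 : 0 ≤ u x₀ y₀ := by
      have := hfix x₀ y₀
      have habs : 0 ≤ cR * |R x₀ - R y₀| := mul_nonneg hcR (abs_nonneg _)
      nlinarith [mul_le_mul_of_nonneg_left hS hcT0]
    intro x y
    exact le_trans h0 (hmin' x y)
  -- Symmetry: first show u x y ≤ u y x for all x y
  have key_sym : ∀ x y : X, u x y - u y x
      = cT * ∑ a, ∑ b, P x a * P y b * (u a b - u b a) := by
    intro x y
    have hswap : ∑ a, ∑ b, P y a * P x b * u a b
        = ∑ a, ∑ b, P x a * P y b * u b a := by
      rw [Finset.sum_comm]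
      refine Finset.sum_congr rfl fun a _ => Finset.sum_congr rfl fun b _ => by ring
    have h1 := hfix x y
    have h2 := hfix y x
    rw [hswap] at h2
    have habs : |R y - R x| = |R x - R y| := abs_sub_comm _ _
    rw [habs] at h2
    have : u x y - u y x = cT * ((∑ a, ∑ b, P x a * P y b * u a b)
        - ∑ a, ∑ b, P x a * P y b * u b a) := by
      rw [h1, h2]; ring
    rw [this]
    congr 1
    rw [← Finset.sum_sub_distrib]
    refine Finset.sum_congr rfl fun a _ => ?_
    rw [← Finset.sum_sub_distrib]
    exact Finset.sum_congr rfl fun b _ => by ring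
  have hle : ∀ x y : X, u x y ≤ u y x := by
    obtain ⟨⟨x₀, y₀⟩, -, hmax⟩ := Finset.exists_max_image
      (Finset.univ : Finset (X × X)) (fun pr => u pr.1 pr.2 - u pr.2 pr.1)
      Finset.univ_nonempty
    have hmax' : ∀ a b : X, u a b - u b a ≤ u x₀ y₀ - u y₀ x₀ :=
      fun a b => hmax (a, b) (Finset.mem_univ _)
    have hS : ∑ a, ∑ b, P x₀ a * P y₀ b * (u a b - u b a) ≤ u x₀ y₀ - u y₀ x₀ :=
      wavg2 _ _ _ (hP0 x₀) (hP0 y₀) (hP1 x₀) (hP1 y₀) hmax'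
    have hM : u x₀ y₀ - u y₀ x₀ ≤ 0 := by
      have hk := key_sym x₀ y₀
      nlinarith [mul_le_mul_of_nonneg_left hS hcT0]
    intro x y
    have := hmax' x y
    linarith
  have hsym : ∀ x y : X, u x y = u y x := fun x y => le_antisymm (hle x y) (hle y x)
  -- Triangle inequality
  refine ⟨hnonneg, hsym, ?_⟩
  have key_tri : ∀ x y z : X, u x z - u x y - u y z
      ≤ cT * ∑ a, ∑ b, ∑ c, P x a * P y b * P z c * (u a c - u a b - u b c) := by
    intro x y z
    have hA : (∑ a, ∑ b, ∑ c, P x a * P y b * P z c * u a c)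
        = ∑ a, ∑ c, P x a * P z c * u a c := by
      refine Finset.sum_congr rfl fun a _ => ?_
      have : (∑ b, ∑ c, P x a * P y b * P z c * u a c)
          = ∑ b, P y b * ∑ c, P x a * P z c * u a c := by
        refine Finset.sum_congr rfl fun b _ => ?_
        rw [Finset.mul_sum]
        exact Finset.sum_congr rfl fun c _ => by ring
      rw [this, ← Finset.sum_mul, hP1, one_mul]
    have hB : (∑ a, ∑ b, ∑ c, P x a * P y b * P z c * u a b)
        = ∑ a, ∑ b, P x a * P y b * u a b := by
      refine Finset.sum_congr rfl fun a _ => Finset.sum_congr rfl fun b _ => ?_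
      have : (∑ c, P x a * P y b * P z c * u a b)
          = (∑ c, P z c) * (P x a * P y b * u a b) := by
        rw [Finset.sum_mul]
        exact Finset.sum_congr rfl fun c _ => by ring
      rw [this, hP1, one_mul]
    have hC : (∑ a, ∑ b, ∑ c, P x a * P y b * P z c * u b c)
        = ∑ b, ∑ c, P y b * P z c * u b c := by
      have : (∑ a, ∑ b, ∑ c, P x a * P y b * P z c * u b c)
          = ∑ a, P x a * ∑ b, ∑ c, P y b * P z c * u b c := by
        refine Finset.sum_congr rfl fun a _ => ?_
        rw [Finset.mul_sum]
        refine Finset.sum_congr rfl fun b _ => ?_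
        rw [Finset.mul_sum]
        exact Finset.sum_congr rfl fun c _ => by ring
      rw [this, ← Finset.sum_mul, hP1, one_mul]
    have hsplit : (∑ a, ∑ b, ∑ c, P x a * P y b * P z c * (u a c - u a b - u b c))
        = (∑ a, ∑ b, ∑ c, P x a * P y b * P z c * u a c)
          - (∑ a, ∑ b, ∑ c, P x a * P y b * P z c * u a b)
          - (∑ a, ∑ b, ∑ c, P x a * P y b * P z c * u b c) := by
      rw [← Finset.sum_sub_distrib, ← Finset.sum_sub_distrib]
      refine Finset.sum_congr rfl fun a _ => ?_
      rw [← Finset.sum_sub_distrib, ← Finset.sum_sub_distrib]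
      refine Finset.sum_congr rfl fun b _ => ?_
      rw [← Finset.sum_sub_distrib, ← Finset.sum_sub_distrib]
      exact Finset.sum_congr rfl fun c _ => by ring
    rw [hsplit, hA, hB, hC]
    have h1 := hfix x z
    have h2 := hfix x y
    have h3 := hfix y z
    have habs : |R x - R z| ≤ |R x - R y| + |R y - R z| := abs_sub_le _ _ _
    nlinarith [mul_le_mul_of_nonneg_left habs hcR]
  intro x y z
  obtain ⟨⟨x₀, y₀, z₀⟩, -, hmax⟩ := Finset.exists_max_image
    (Finset.univ : Finset (X × X × X))
    (fun t => u t.1 t.2.2 - u t.1 t.2.1 - u t.2.1 t.2.2) Finset.univ_nonempty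
  have hmax' : ∀ a b c : X, u a c - u a b - u b c ≤ u x₀ z₀ - u x₀ y₀ - u y₀ z₀ :=
    fun a b c => hmax (a, b, c) (Finset.mem_univ _)
  have hS : ∑ a, ∑ b, ∑ c, P x₀ a * P y₀ b * P z₀ c * (u a c - u a b - u b c)
      ≤ u x₀ z₀ - u x₀ y₀ - u y₀ z₀ :=
    wavg3 _ _ _ _ (hP0 x₀) (hP0 y₀) (hP0 z₀) (hP1 x₀) (hP1 y₀) (hP1 z₀)
      (fun a b c => hmax' a b c)
  have hM : u x₀ z₀ - u x₀ y₀ - u y₀ z₀ ≤ 0 := by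
    have hk := key_tri x₀ y₀ z₀
    nlinarith [mul_le_mul_of_nonneg_left hS hcT0]
  have := hmax' x y z
  linarith
end
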